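/- arXiv:2512.09367 — 4 statements merged into one kernel-verified Lean document; each statement's English description precedes it below -/
import Mathlib

section
/- In the star instance described, the VCG threshold payment to each peripheral facility ℓ_i equals 2, so the total VCG cost (payments plus connection cost) is 3k, and the frugality ratio of VCG on this instance is 3k/(k+2) = 3 − 6/(|L|+1). -/
/-- Distance in the star instance: user `u` is at distance 1 from the central facility `0`
and from its own peripheral facility `u+1`, and at distance 3 from all other facilities. -/
noncomputable def starDist (k : ℕ) (u : Fin k) (ℓ : Fin (k + 1)) : ℝ :=
  if ℓ = 0 then 1 else if (ℓ : ℕ) = (u : ℕ) + 1 then 1 else 3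

/-- Opening costs in the star instance: 2 for the center, 0 for peripheral facilities. -/
noncomputable def starOpen (k : ℕ) (ℓ : Fin (k + 1)) : ℝ :=
  if ℓ = 0 then 2 else 0

/-- Total cost of a facility set: opening costs plus connection costs (each user connects to
its nearest open facility). -/
noncomputable def starCost (k : ℕ) (o : Fin (k + 1) → ℝ) (S : Finset (Fin (k + 1))) : ℝ :=
  ∑ ℓ ∈ S, o ℓ + ∑ u : Fin k, ⨅ v : {x // x ∈ S}, starDist k u (v : Fin (k + 1))

/-- `c(OPT(∞, o_{-i}))`: minimum total cost over nonempty facility sets avoiding `i`. -/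
noncomputable def vcgInfty (k : ℕ) (o : Fin (k + 1) → ℝ) (i : Fin (k + 1)) : ℝ :=
  sInf {x : ℝ | ∃ S : Finset (Fin (k + 1)), S.Nonempty ∧ i ∉ S ∧ x = starCost k o S}

/-- `c(OPT(0, o_{-i}))`: minimum total cost over nonempty facility sets when `o_i = 0`. -/
noncomputable def vcgZero (k : ℕ) (o : Fin (k + 1) → ℝ) (i : Fin (k + 1)) : ℝ :=
  sInf {x : ℝ | ∃ S : Finset (Fin (k + 1)), S.Nonempty ∧
    x = starCost k (Function.update o i 0) S}

section helpers
variable {k : ℕ}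

lemma starDist_ge_one (u : Fin k) (ℓ : Fin (k+1)) : (1:ℝ) ≤ starDist k u ℓ := by
  unfold starDist; split_ifs <;> norm_num

lemma conn_bddBelow (u : Fin k) (S : Finset (Fin (k+1))) :
    BddBelow (Set.range fun v : {x // x ∈ S} => starDist k u (v : Fin (k+1))) :=
  ⟨1, by rintro x ⟨v, rfl⟩; exact starDist_ge_one u v⟩

lemma conn_ge_one (u : Fin k) {S : Finset (Fin (k+1))} (hS : S.Nonempty) :
    (1:ℝ) ≤ ⨅ v : {x // x ∈ S}, starDist k u (v : Fin (k+1)) := by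
  have : Nonempty {x // x ∈ S} := ⟨⟨hS.choose, hS.choose_spec⟩⟩
  exact le_ciInf fun v => starDist_ge_one u v

lemma conn_le (u : Fin k) {S : Finset (Fin (k+1))} {v : Fin (k+1)} (hv : v ∈ S) :
    (⨅ w : {x // x ∈ S}, starDist k u (w : Fin (k+1))) ≤ starDist k u v :=
  ciInf_le (conn_bddBelow u S) ⟨v, hv⟩

lemma conn_eq_one (u : Fin k) {S : Finset (Fin (k+1))} {v : Fin (k+1)} (hv : v ∈ S)
    (h1 : starDist k u v = 1) :
    (⨅ w : {x // x ∈ S}, starDist k u (w : Fin (k+1))) = 1 :=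
  le_antisymm (h1 ▸ conn_le u hv) (conn_ge_one u ⟨v, hv⟩)

lemma conn_ge_three (u : Fin k) {S : Finset (Fin (k+1))} (hS : S.Nonempty)
    (h : ∀ v ∈ S, v ≠ 0 ∧ (v : ℕ) ≠ (u : ℕ) + 1) :
    (3:ℝ) ≤ ⨅ w : {x // x ∈ S}, starDist k u (w : Fin (k+1)) := by
  have : Nonempty {x // x ∈ S} := ⟨⟨hS.choose, hS.choose_spec⟩⟩
  refine le_ciInf fun v => ?_
  obtain ⟨h1, h2⟩ := h v v.2
  unfold starDist
  rw [if_neg h1, if_neg h2]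

lemma starOpen_nonneg (ℓ : Fin (k+1)) : (0:ℝ) ≤ starOpen k ℓ := by
  unfold starOpen; split_ifs <;> norm_num

lemma cost_center : starCost k (starOpen k) {0} = (k : ℝ) + 2 := by
  unfold starCost
  have h1 : ∀ u : Fin k,
      (⨅ w : {x // x ∈ ({0} : Finset (Fin (k+1)))}, starDist k u (w : Fin (k+1))) = 1 := by
    intro u
    exact conn_eq_one u (Finset.mem_singleton_self 0) (by unfold starDist; simp)
  rw [Finset.sum_congr rfl fun u _ => h1 u]
  simp [starOpen]
  ring

lemma cost_periph : starCost k (starOpen k) (Finset.univ \ {0}) = (k : ℝ) := by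
  unfold starCost
  have h1 : ∀ u : Fin k,
      (⨅ w : {x // x ∈ (Finset.univ \ {0} : Finset (Fin (k+1)))},
        starDist k u (w : Fin (k+1))) = 1 := by
    intro u
    refine conn_eq_one u (v := Fin.succ u) ?_ ?_
    · simp [Fin.succ_ne_zero]
    · unfold starDist
      rw [if_neg (Fin.succ_ne_zero u), if_pos (Fin.val_succ u)]
  rw [Finset.sum_congr rfl fun u _ => h1 u]
  have h2 : ∀ ℓ ∈ (Finset.univ \ {0} : Finset (Fin (k+1))), starOpen k ℓ = 0 := by
    intro ℓ hℓ
    simp only [Finset.mem_sdiff, Finset.mem_singleton] at hℓ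
    unfold starOpen; rw [if_neg hℓ.2]
  rw [Finset.sum_congr rfl h2]
  simp

lemma cost_ge_k {S : Finset (Fin (k+1))} (hS : S.Nonempty) :
    (k : ℝ) ≤ starCost k (starOpen k) S := by
  unfold starCost
  have h1 : (0:ℝ) ≤ ∑ ℓ ∈ S, starOpen k ℓ :=
    Finset.sum_nonneg fun ℓ _ => starOpen_nonneg ℓ
  have h2 : (k : ℝ) ≤ ∑ u : Fin k, ⨅ w : {x // x ∈ S}, starDist k u (w : Fin (k+1)) := by
    calc (k : ℝ) = ∑ _u : Fin k, (1:ℝ) := by simp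
    _ ≤ _ := Finset.sum_le_sum fun u _ => conn_ge_one u hS
  linarith

lemma cost_ge_k_add_two (hk : 1 ≤ k) {i : Fin (k+1)} (hi : i ≠ 0)
    {S : Finset (Fin (k+1))} (hS : S.Nonempty) (hiS : i ∉ S) :
    (k : ℝ) + 2 ≤ starCost k (starOpen k) S := by
  unfold starCost
  by_cases h0 : (0 : Fin (k+1)) ∈ S
  · have h1 : (2:ℝ) ≤ ∑ ℓ ∈ S, starOpen k ℓ := by
      have := Finset.single_le_sum (f := starOpen k)
        (fun ℓ _ => starOpen_nonneg ℓ) h0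
      simpa [starOpen] using this
    have h2 : (k : ℝ) ≤ ∑ u : Fin k, ⨅ w : {x // x ∈ S}, starDist k u (w : Fin (k+1)) := by
      calc (k : ℝ) = ∑ _u : Fin k, (1:ℝ) := by simp
      _ ≤ _ := Finset.sum_le_sum fun u _ => conn_ge_one u hS
    linarith
  · have h1 : (0:ℝ) ≤ ∑ ℓ ∈ S, starOpen k ℓ :=
      Finset.sum_nonneg fun ℓ _ => starOpen_nonneg ℓ
    -- the user whose peripheral facility is i
    have hipos : 0 < (i : ℕ) := Nat.pos_of_ne_zero (fun h => hi (Fin.ext (by simpa using h)))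
    set w : Fin k := ⟨(i : ℕ) - 1, by have := i.isLt; omega⟩ with hw
    have hw1 : (w : ℕ) + 1 = (i : ℕ) := by simp [hw]; omega
    have key : ∀ u : Fin k, (1:ℝ) + (if u = w then 2 else 0)
        ≤ ⨅ v : {x // x ∈ S}, starDist k u (v : Fin (k+1)) := by
      intro u
      by_cases hu : u = w
      · subst hu
        rw [if_pos rfl]
        norm_num
        refine conn_ge_three w hS fun v hv => ⟨?_, ?_⟩
        · intro h; exact h0 (h ▸ hv)
        · intro h
          apply hiS
          have : v = i := Fin.ext (by omega)
          exact this ▸ hv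
      · rw [if_neg hu]; simpa using conn_ge_one u hS
    have h2 : (k : ℝ) + 2 ≤ ∑ u : Fin k, ⨅ v : {x // x ∈ S}, starDist k u (v : Fin (k+1)) := by
      calc (k : ℝ) + 2 = ∑ u : Fin k, ((1:ℝ) + (if u = w then 2 else 0)) := by
            rw [Finset.sum_add_distrib]
            simp [Finset.sum_ite_eq' Finset.univ w]
      _ ≤ _ := Finset.sum_le_sum fun u _ => key u
    linarith

lemma vcgInfty_eq (hk : 1 ≤ k) {i : Fin (k+1)} (hi : i ≠ 0) :
    vcgInfty k (starOpen k) i = (k : ℝ) + 2 := by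
  unfold vcgInfty
  apply le_antisymm
  · apply csInf_le
    · exact ⟨(k:ℝ), by rintro x ⟨S, hS, -, rfl⟩; linarith [cost_ge_k hS]⟩
    · exact ⟨{0}, Finset.singleton_nonempty 0, by simpa using hi, cost_center.symm⟩
  · apply le_csInf
    · exact ⟨(k:ℝ)+2, {0}, Finset.singleton_nonempty 0, by simpa using hi, cost_center.symm⟩
    · rintro x ⟨S, hS, hiS, rfl⟩
      exact cost_ge_k_add_two hk hi hS hiS

lemma vcgZero_eq (hk : 1 ≤ k) {i : Fin (k+1)} (hi : i ≠ 0) :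
    vcgZero k (starOpen k) i = (k : ℝ) := by
  unfold vcgZero
  have hupd : Function.update (starOpen k) i 0 = starOpen k := by
    have h0 : starOpen k i = 0 := by unfold starOpen; rw [if_neg hi]
    conv_lhs => rw [← h0]
    exact Function.update_eq_self i (starOpen k)
  rw [hupd]
  have hne : (Finset.univ \ {0} : Finset (Fin (k+1))).Nonempty := by
    refine ⟨Fin.last k, Finset.mem_sdiff.mpr ⟨Finset.mem_univ _, ?_⟩⟩
    simp [Fin.ext_iff]
    omega
  apply le_antisymm
  · apply csInf_le
    · exact ⟨(k:ℝ), by rintro x ⟨S, hS, rfl⟩; exact cost_ge_k hS⟩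
    · exact ⟨Finset.univ \ {0}, hne, cost_periph.symm⟩
  · apply le_csInf
    · exact ⟨(k:ℝ), Finset.univ \ {0}, hne, cost_periph.symm⟩
    · rintro x ⟨S, hS, rfl⟩
      exact cost_ge_k hS

end helpers

/-- In the star instance, the VCG threshold payment to each peripheral facility equals 2, so
the total VCG cost (payments plus connection cost k of OPT) is 3k, and the frugality ratio on
this instance, against the frugal solution `{ℓ_0}` of cost k+2, is
`3k/(k+2) = 3 − 6/(|L|+1)` where `|L| = k+1`. -/
theorem star_instance_vcg (k : ℕ) (hk : 1 ≤ k) :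
    (∀ i : Fin (k + 1), i ≠ 0 →
      vcgInfty k (starOpen k) i - vcgZero k (starOpen k) i = 2) ∧
    (∑ i ∈ Finset.univ.filter (fun i : Fin (k + 1) => i ≠ 0),
        (vcgInfty k (starOpen k) i - vcgZero k (starOpen k) i)) + (k : ℝ) = 3 * k ∧
    ((∑ i ∈ Finset.univ.filter (fun i : Fin (k + 1) => i ≠ 0),
        (vcgInfty k (starOpen k) i - vcgZero k (starOpen k) i)) + (k : ℝ))
        / ((k : ℝ) + 2)
      = 3 * (k : ℝ) / ((k : ℝ) + 2) ∧
    3 * (k : ℝ) / ((k : ℝ) + 2) = 3 - 6 / (((k : ℝ) + 1) + 1) := by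
  have hpay : ∀ i : Fin (k + 1), i ≠ 0 →
      vcgInfty k (starOpen k) i - vcgZero k (starOpen k) i = 2 := by
    intro i hi
    rw [vcgInfty_eq hk hi, vcgZero_eq hk hi]
    ring
  have hsum : (∑ i ∈ Finset.univ.filter (fun i : Fin (k + 1) => i ≠ 0),
      (vcgInfty k (starOpen k) i - vcgZero k (starOpen k) i)) = 2 * k := by
    rw [Finset.sum_congr rfl fun i hi => hpay i (Finset.mem_filter.mp hi).2]
    rw [Finset.sum_const]
    have hcard : (Finset.univ.filter (fun i : Fin (k + 1) => i ≠ 0)).card = k := by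
      rw [Finset.filter_ne']
      simp [Finset.card_erase_of_mem]
    rw [hcard]
    ring
  have hk2 : (k : ℝ) + 2 ≠ 0 := by positivity
  refine ⟨hpay, ?_, ?_, ?_⟩
  · rw [hsum]; ring
  · rw [hsum]; ring_nf
  · field_simp
    ring
end

section
/- The frugality ratio of the VCG auction for metric uncapacitated facility location is at least 3 − 6/(n+1) for instances with n facility locations; in particular, the worst-case frugality ratio of VCG is at least 3 (taking n → ∞). -/
section UFL

variable {M : Type} [MetricSpace M] [DecidableEq M]

/-- Total connection cost of users U to facility set S: each user connects to the
nearest facility in S. -/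
noncomputable def connCost (U S : Finset M) : ℝ :=
  ∑ u ∈ U, ⨅ v : {x // x ∈ S}, dist u (v : M)

/-- Total cost of a facility set: opening costs plus connection cost. -/
noncomputable def totalCost (o : M → ℝ) (U S : Finset M) : ℝ :=
  ∑ ℓ ∈ S, o ℓ + connCost U S

/-- `S` is an optimal (cost-minimizing) nonempty facility set within `L`. -/
def IsOpt (o : M → ℝ) (U L S : Finset M) : Prop :=
  S ⊆ L ∧ S.Nonempty ∧
    ∀ T : Finset M, T ⊆ L → T.Nonempty → totalCost o U S ≤ totalCost o U T

/-- VCG threshold payment to facility ℓ: the largest bid `b ≥ 0` such that ℓ is still in an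
optimal solution when its opening cost is `b` and the others are unchanged. -/
noncomputable def thresholdPay (o : M → ℝ) (U L : Finset M) (ℓ : M) : ℝ :=
  sSup {b : ℝ | 0 ≤ b ∧
    ∃ S : Finset M, IsOpt (Function.update o ℓ b) U L S ∧ ℓ ∈ S}

/-- Cost of the frugal solution: the minimum total cost among nonempty facility sets
disjoint from the optimal set. -/
noncomputable def frugalCost (o : M → ℝ) (U L OPTset : Finset M) : ℝ :=
  sInf {x : ℝ | ∃ T : Finset M, T ⊆ L \ OPTset ∧ T.Nonempty ∧ x = totalCost o U T}

end UFL

namespace VCGLB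

inductive Pt (k : ℕ) : Type
  | g : Pt k
  | u : Fin k → Pt k
  | f : Fin k → Pt k
  deriving DecidableEq

variable {k : ℕ}

def depth : Pt k → ℝ
  | .g => 0
  | .u _ => 1
  | .f _ => 2

def br : Pt k → Option (Fin k)
  | .g => none
  | .u i => some i
  | .f i => some i

lemma depth_nonneg (x : Pt k) : 0 ≤ depth x := by cases x <;> norm_num [depth]

noncomputable def pdist (x y : Pt k) : ℝ :=
  if br x = br y then |depth x - depth y| else depth x + depth y

lemma pdist_self (x : Pt k) : pdist x x = 0 := by simp [pdist]

lemma pdist_comm (x y : Pt k) : pdist x y = pdist y x := by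
  unfold pdist
  by_cases h : br x = br y
  · rw [if_pos h, if_pos h.symm, abs_sub_comm]
  · rw [if_neg h, if_neg (fun e => h e.symm), add_comm]

lemma pdist_triangle (x y z : Pt k) : pdist x z ≤ pdist x y + pdist y z := by
  unfold pdist
  by_cases hxy : br x = br y <;> by_cases hyz : br y = br z
  · rw [if_pos (hxy.trans hyz), if_pos hxy, if_pos hyz]
    exact abs_sub_le _ _ _
  · rw [if_neg (fun h => hyz (hxy.symm.trans h)), if_pos hxy, if_neg hyz]
    have h1 : depth x - depth y ≤ |depth x - depth y| := le_abs_self _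
    linarith
  · rw [if_neg (fun h => hxy (h.trans hyz.symm)), if_neg hxy, if_pos hyz]
    have h1 : depth z - depth y ≤ |depth y - depth z| := by
      rw [abs_sub_comm]; exact le_abs_self _
    linarith
  · by_cases hxz : br x = br z
    · rw [if_pos hxz, if_neg hxy, if_neg hyz]
      have h1 : |depth x - depth z| ≤ |depth x| + |depth z| := by
        rw [sub_eq_add_neg]
        exact (abs_add_le _ _).trans (by rw [abs_neg])
      rw [abs_of_nonneg (depth_nonneg x), abs_of_nonneg (depth_nonneg z)] at h1
      linarith [depth_nonneg y]
    · rw [if_neg hxz, if_neg hxy, if_neg hyz]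
      linarith [depth_nonneg y]

lemma pdist_eq_zero {x y : Pt k} (h : pdist x y = 0) : x = y := by
  unfold pdist at h
  by_cases hb : br x = br y
  · rw [if_pos hb, abs_eq_zero, sub_eq_zero] at h
    cases x <;> cases y <;> simp_all [br, depth]
  · rw [if_neg hb] at h
    have hx : depth x = 0 := le_antisymm (by linarith [depth_nonneg y]) (depth_nonneg x)
    have hy : depth y = 0 := by linarith [depth_nonneg x]
    cases x <;> cases y <;> simp_all [depth, br]

noncomputable instance : MetricSpace (Pt k) where
  dist := pdist
  dist_self := pdist_self
  dist_comm := pdist_comm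
  dist_triangle := pdist_triangle
  eq_of_dist_eq_zero := fun h => pdist_eq_zero h

lemma dist_def (x y : Pt k) : dist x y = pdist x y := rfl

lemma dist_ug (i : Fin k) : dist (Pt.u i) (Pt.g : Pt k) = 1 := by
  rw [dist_def]; simp [pdist, br, depth]

lemma dist_uf (i j : Fin k) : dist (Pt.u i) (Pt.f j) = if i = j then 1 else 3 := by
  rw [dist_def]
  simp only [pdist, br, depth]
  by_cases h : i = j
  · subst h
    norm_num
  · norm_num [h]

noncomputable def oC : Pt k → ℝ := fun x => if x = Pt.g then 2 else 0

lemma u_injective : Function.Injective (Pt.u : Fin k → Pt k) := fun a b h => by simpa using h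
lemma f_injective : Function.Injective (Pt.f : Fin k → Pt k) := fun a b h => by simpa using h

def uEmb : Fin k ↪ Pt k := ⟨Pt.u, u_injective⟩
def fEmb : Fin k ↪ Pt k := ⟨Pt.f, f_injective⟩

noncomputable def US : Finset (Pt k) := Finset.univ.map uEmb
noncomputable def SS : Finset (Pt k) := Finset.univ.map fEmb
noncomputable def LS : Finset (Pt k) := insert Pt.g SS

lemma mem_SS {x : Pt k} : x ∈ (SS : Finset (Pt k)) ↔ ∃ i, Pt.f i = x := by
  simp [SS, fEmb]

lemma f_mem_SS (i : Fin k) : (Pt.f i : Pt k) ∈ (SS : Finset (Pt k)) :=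
  mem_SS.mpr ⟨i, rfl⟩

lemma g_not_mem_SS : (Pt.g : Pt k) ∉ (SS : Finset (Pt k)) := by
  simp [mem_SS]

lemma mem_LS {x : Pt k} : x ∈ (LS : Finset (Pt k)) ↔ x = Pt.g ∨ ∃ i, Pt.f i = x := by
  simp [LS, mem_SS]

lemma SS_subset_LS : (SS : Finset (Pt k)) ⊆ LS := Finset.subset_insert _ _

lemma SS_nonempty (hk : 0 < k) : (SS : Finset (Pt k)).Nonempty :=
  ⟨Pt.f ⟨0, hk⟩, f_mem_SS _⟩

lemma le_inf_dist {T : Finset (Pt k)} (hT : T.Nonempty) {c : ℝ} {w : Pt k}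
    (h : ∀ x ∈ T, c ≤ dist w x) : c ≤ ⨅ v : {x // x ∈ T}, dist w (v : Pt k) := by
  haveI : Nonempty {x // x ∈ T} := ⟨⟨hT.choose, hT.choose_spec⟩⟩
  exact le_ciInf fun v => h v v.2

lemma inf_dist_le {T : Finset (Pt k)} {x : Pt k} (hx : x ∈ T) (w : Pt k) :
    (⨅ v : {x // x ∈ T}, dist w (v : Pt k)) ≤ dist w x :=
  ciInf_le (Set.Finite.bddBelow (Set.finite_range _)) (⟨x, hx⟩ : {x // x ∈ T})

lemma one_le_dist_u_L (i : Fin k) {x : Pt k} (hx : x ∈ (LS : Finset (Pt k))) :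
    1 ≤ dist (Pt.u i) x := by
  rcases mem_LS.mp hx with h | ⟨j, hj⟩
  · subst h; rw [dist_ug]
  · subst hj; rw [dist_uf]; split <;> norm_num

lemma connCost_ge {T : Finset (Pt k)} (hsub : T ⊆ LS) (hT : T.Nonempty) :
    (k : ℝ) ≤ connCost US T := by
  rw [connCost]
  have h1 : ∀ x ∈ (US : Finset (Pt k)),
      (1 : ℝ) ≤ ⨅ v : {y // y ∈ T}, dist x (v : Pt k) := by
    intro x _
    exact le_inf_dist hT fun y hy =>
      (by
        obtain ⟨i, -, rfl⟩ := Finset.mem_map.mp ‹x ∈ US›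
        exact one_le_dist_u_L i (hsub hy))
  calc (k : ℝ) = ∑ _x ∈ (US : Finset (Pt k)), (1 : ℝ) := by
        simp [US]
    _ ≤ _ := Finset.sum_le_sum h1

lemma inf_SS (i : Fin k) :
    (⨅ v : {x // x ∈ (SS : Finset (Pt k))}, dist (Pt.u i) (v : Pt k)) = 1 := by
  refine le_antisymm ?_ ?_
  · have := inf_dist_le (f_mem_SS i) (Pt.u i)
    rwa [dist_uf, if_pos rfl] at this
  · refine le_inf_dist (SS_nonempty ?_) ?_
    · exact i.pos
    · intro x hx
      obtain ⟨j, hj⟩ := mem_SS.mp hx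
      subst hj
      rw [dist_uf]; split <;> norm_num

lemma inf_g (i : Fin k) :
    (⨅ v : {x // x ∈ ({Pt.g} : Finset (Pt k))}, dist (Pt.u i) (v : Pt k)) = 1 := by
  refine le_antisymm ?_ ?_
  · have := inf_dist_le (Finset.mem_singleton_self (Pt.g : Pt k)) (Pt.u i)
    rwa [dist_ug] at this
  · refine le_inf_dist ⟨_, Finset.mem_singleton_self _⟩ ?_
    intro x hx
    rw [Finset.mem_singleton.mp hx, dist_ug]

lemma connCost_SS (hk : 0 < k) : connCost (US : Finset (Pt k)) SS = k := by
  rw [connCost, US, Finset.sum_map]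
  simp only [uEmb, Function.Embedding.coeFn_mk]
  rw [Finset.sum_congr rfl fun i _ => inf_SS i]
  simp

lemma connCost_g : connCost (US : Finset (Pt k)) {Pt.g} = k := by
  rw [connCost, US, Finset.sum_map]
  simp only [uEmb, Function.Embedding.coeFn_mk]
  rw [Finset.sum_congr rfl fun i _ => inf_g i]
  simp

lemma connCost_ge' (i₀ : Fin k) {T : Finset (Pt k)} (hsub : T ⊆ LS) (hT : T.Nonempty)
    (hg : Pt.g ∉ T) (hf : Pt.f i₀ ∉ T) : (k : ℝ) + 2 ≤ connCost US T := by
  rw [connCost, US, Finset.sum_map]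
  simp only [uEmb, Function.Embedding.coeFn_mk]
  have hb : ∀ i : Fin k, (if i = i₀ then (3 : ℝ) else 1) ≤
      ⨅ v : {x // x ∈ T}, dist (Pt.u i) (v : Pt k) := by
    intro i
    refine le_inf_dist hT ?_
    intro x hx
    rcases mem_LS.mp (hsub hx) with h | ⟨j, hj⟩
    · exact absurd (h ▸ hx) hg
    · subst hj
      have hji : j ≠ i₀ := fun e => hf (e ▸ hx)
      show (if i = i₀ then (3:ℝ) else 1) ≤ dist (Pt.u i) (Pt.f j)
      rw [dist_uf]
      rcases eq_or_ne i i₀ with rfl | hii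
      · rw [if_pos rfl, if_neg (Ne.symm hji)]
      · rw [if_neg hii]; split <;> norm_num
  have hsum : ∑ i : Fin k, (if i = i₀ then (3 : ℝ) else 1) = (k : ℝ) + 2 := by
    have h2 : ∀ i : Fin k, (if i = i₀ then (3 : ℝ) else 1)
        = 1 + (if i = i₀ then (2:ℝ) else 0) := by
      intro i; split <;> norm_num
    rw [Finset.sum_congr rfl fun i _ => h2 i, Finset.sum_add_distrib,
      Finset.sum_ite_eq' Finset.univ i₀ (fun _ => (2:ℝ))]
    simp
  calc (k : ℝ) + 2 = ∑ i : Fin k, (if i = i₀ then (3 : ℝ) else 1) := hsum.symm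
    _ ≤ _ := Finset.sum_le_sum fun i _ => hb i

lemma sum_o_SS (o'' : Pt k → ℝ) (i₀ : Fin k) (b : ℝ)
    (hf0 : ∀ i, i ≠ i₀ → o'' (Pt.f i) = 0) (hfb : o'' (Pt.f i₀) = b) :
    ∑ ℓ ∈ (SS : Finset (Pt k)), o'' ℓ = b := by
  rw [SS, Finset.sum_map]
  simp only [fEmb, Function.Embedding.coeFn_mk]
  have : ∀ i : Fin k, o'' (Pt.f i) = if i = i₀ then b else 0 := by
    intro i
    rcases eq_or_ne i i₀ with rfl | h
    · simpa using hfb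
    · simpa [h] using hf0 i h
  rw [Finset.sum_congr rfl fun i _ => this i,
    Finset.sum_ite_eq' Finset.univ i₀ (fun _ => b)]
  simp

lemma totalCost_SS (hk : 0 < k) (o'' : Pt k → ℝ) (i₀ : Fin k) (b : ℝ)
    (hf0 : ∀ i, i ≠ i₀ → o'' (Pt.f i) = 0) (hfb : o'' (Pt.f i₀) = b) :
    totalCost o'' (US : Finset (Pt k)) SS = b + k := by
  rw [totalCost, sum_o_SS o'' i₀ b hf0 hfb, connCost_SS hk]

lemma totalCost_g (o'' : Pt k → ℝ) (hg2 : o'' Pt.g = 2) :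
    totalCost o'' (US : Finset (Pt k)) {Pt.g} = 2 + k := by
  rw [totalCost, Finset.sum_singleton, hg2, connCost_g]

lemma opt_main (hk : 0 < k) (o'' : Pt k → ℝ) (i₀ : Fin k) (b : ℝ)
    (hb0 : 0 ≤ b) (hb2 : b ≤ 2) (hg2 : o'' Pt.g = 2)
    (hf0 : ∀ i, i ≠ i₀ → o'' (Pt.f i) = 0) (hfb : o'' (Pt.f i₀) = b) :
    IsOpt o'' (US : Finset (Pt k)) LS SS := by
  have hnn : ∀ x ∈ (LS : Finset (Pt k)), 0 ≤ o'' x := by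
    intro x hx
    rcases mem_LS.mp hx with h | ⟨j, hj⟩
    · rw [h, hg2]; norm_num
    · subst hj
      rcases eq_or_ne j i₀ with rfl | h
      · rw [hfb]; exact hb0
      · rw [hf0 j h]
  have htc := totalCost_SS hk o'' i₀ b hf0 hfb
  refine ⟨SS_subset_LS, SS_nonempty hk, fun T hsub hT => ?_⟩
  rw [htc, totalCost]
  by_cases hfi : Pt.f i₀ ∈ T
  · have h1 : b ≤ ∑ ℓ ∈ T, o'' ℓ :=
      hfb ▸ Finset.single_le_sum (fun x hx => hnn x (hsub hx)) hfi
    have h2 := connCost_ge hsub hT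
    linarith
  by_cases hgT : (Pt.g : Pt k) ∈ T
  · have h1 : (2:ℝ) ≤ ∑ ℓ ∈ T, o'' ℓ :=
      hg2 ▸ Finset.single_le_sum (fun x hx => hnn x (hsub hx)) hgT
    have h2 := connCost_ge hsub hT
    linarith
  · have h1 : (0:ℝ) ≤ ∑ ℓ ∈ T, o'' ℓ :=
      Finset.sum_nonneg fun x hx => hnn x (hsub hx)
    have h2 := connCost_ge' i₀ hsub hT hgT hfi
    linarith

lemma oC_nonneg : ∀ x : Pt k, 0 ≤ oC x := by
  intro x; unfold oC; split <;> norm_num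

lemma oC_g : (oC : Pt k → ℝ) Pt.g = 2 := by simp [oC]

lemma oC_f (i : Fin k) : (oC : Pt k → ℝ) (Pt.f i) = 0 := by simp [oC]

lemma g_ne_f (i : Fin k) : (Pt.g : Pt k) ≠ Pt.f i := by simp

lemma opt_oC (hk : 0 < k) : IsOpt (oC : Pt k → ℝ) US LS SS :=
  opt_main hk oC ⟨0, hk⟩ 0 le_rfl (by norm_num) oC_g (fun i _ => oC_f i) (oC_f _)

lemma update_g (i₀ : Fin k) (b : ℝ) :
    Function.update (oC : Pt k → ℝ) (Pt.f i₀) b Pt.g = 2 := by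
  rw [Function.update_of_ne (g_ne_f i₀), oC_g]

lemma update_f (i₀ : Fin k) (b : ℝ) {i : Fin k} (h : i ≠ i₀) :
    Function.update (oC : Pt k → ℝ) (Pt.f i₀) b (Pt.f i) = 0 := by
  rw [Function.update_of_ne (by simp [h]), oC_f]

lemma threshold_eq (hk : 0 < k) (i₀ : Fin k) :
    thresholdPay (oC : Pt k → ℝ) US LS (Pt.f i₀) = 2 := by
  have hset : {b : ℝ | 0 ≤ b ∧
      ∃ S : Finset (Pt k), IsOpt (Function.update oC (Pt.f i₀) b) US LS S ∧ Pt.f i₀ ∈ S}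
      = Set.Icc 0 2 := by
    ext b
    constructor
    · rintro ⟨hb0, S', hOpt, hmem⟩
      refine ⟨hb0, ?_⟩
      have hgL : (Pt.g : Pt k) ∈ LS := Finset.mem_insert_self _ _
      have h1 := hOpt.2.2 {Pt.g} (Finset.singleton_subset_iff.mpr hgL)
        ⟨_, Finset.mem_singleton_self _⟩
      rw [totalCost_g _ (update_g i₀ b)] at h1
      have hnn : ∀ x ∈ S', 0 ≤ Function.update (oC : Pt k → ℝ) (Pt.f i₀) b x := by
        intro x hx
        rcases eq_or_ne x (Pt.f i₀) with rfl | h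
        · rw [Function.update_self]; exact hb0
        · rw [Function.update_of_ne h]; exact oC_nonneg x
      have h2 : b ≤ ∑ ℓ ∈ S', Function.update (oC : Pt k → ℝ) (Pt.f i₀) b ℓ := by
        have := Finset.single_le_sum hnn hmem
        rwa [Function.update_self] at this
      have h3 := connCost_ge hOpt.1 hOpt.2.1
      rw [totalCost] at h1
      linarith
    · rintro ⟨hb0, hb2⟩
      exact ⟨hb0, SS,
        opt_main hk _ i₀ b hb0 hb2 (update_g i₀ b) (fun i h => update_f i₀ b h)
          (Function.update_self _ _ _), f_mem_SS i₀⟩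
  rw [thresholdPay, hset, csSup_Icc (by norm_num : (0:ℝ) ≤ 2)]

lemma sum_threshold (hk : 0 < k) :
    ∑ ℓ ∈ (SS : Finset (Pt k)), thresholdPay oC US LS ℓ = 2 * k := by
  rw [SS, Finset.sum_map]
  simp only [fEmb, Function.Embedding.coeFn_mk]
  rw [Finset.sum_congr rfl fun i _ => threshold_eq hk i]
  simp [mul_comm]

lemma frugal_eq : frugalCost (oC : Pt k → ℝ) US LS SS = 2 + k := by
  have hLS : (LS : Finset (Pt k)) \ SS = {Pt.g} := by
    ext x
    simp only [Finset.mem_sdiff, LS, Finset.mem_insert, Finset.mem_singleton]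
    constructor
    · rintro ⟨h1 | h1, h2⟩
      · exact h1
      · exact absurd h1 h2
    · rintro rfl
      exact ⟨Or.inl rfl, g_not_mem_SS⟩
  rw [frugalCost, hLS]
  have hs : {x : ℝ | ∃ T : Finset (Pt k),
      T ⊆ {Pt.g} ∧ T.Nonempty ∧ x = totalCost oC US T} = {2 + (k:ℝ)} := by
    ext x
    simp only [Set.mem_setOf_eq, Set.mem_singleton_iff]
    constructor
    · rintro ⟨T, hsub, hne, rfl⟩
      rcases Finset.subset_singleton_iff.mp hsub with rfl | rfl
      · exact absurd hne (by simp)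
      · exact totalCost_g _ oC_g
    · rintro rfl
      exact ⟨{Pt.g}, subset_rfl, ⟨_, Finset.mem_singleton_self _⟩,
        (totalCost_g _ oC_g).symm⟩
  rw [hs, csInf_singleton]

lemma card_LS : (LS : Finset (Pt k)).card = k + 1 := by
  rw [LS, Finset.card_insert_of_notMem g_not_mem_SS, SS, Finset.card_map,
    Finset.card_univ, Fintype.card_fin]

lemma main (n : ℕ) (hn : 2 ≤ n) :
    ∃ (M : Type) (_ : MetricSpace M) (_ : DecidableEq M)
      (U L S : Finset M) (o : M → ℝ),
      L.card = n ∧ (∀ ℓ, 0 ≤ o ℓ) ∧ IsOpt o U L S ∧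
      3 - 6 / ((n : ℝ) + 1) ≤
        ((∑ ℓ ∈ S, thresholdPay o U L ℓ) + connCost U S) / frugalCost o U L S := by
  set k := n - 1 with hkdef
  have hk : 0 < k := by omega
  refine ⟨Pt k, inferInstance, inferInstance, US, LS, SS, oC, ?_, oC_nonneg, opt_oC hk, ?_⟩
  · rw [card_LS]; omega
  · rw [sum_threshold hk, connCost_SS hk, frugal_eq]
    have hkn : (k : ℝ) = (n : ℝ) - 1 := by
      have : (k : ℝ) + 1 = (n : ℝ) := by exact_mod_cast congrArg Nat.cast (by omega : k + 1 = n)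
      linarith
    rw [hkn]
    have hn1 : (0:ℝ) < (n : ℝ) + 1 := by positivity
    rw [show (2:ℝ) + ((n:ℝ) - 1) = (n:ℝ) + 1 by ring, le_div_iff₀ hn1, sub_mul,
      div_mul_cancel₀ _ (ne_of_gt hn1)]
    linarith

end VCGLB

/-- The frugality ratio of the VCG auction for metric UFL is at least `3 − 6/(n+1)` on
instances with n facility locations; in particular its worst-case frugality ratio is at
least 3 (taking n → ∞). -/
theorem vcg_frugality_lower_bound :
    (∀ n : ℕ, 2 ≤ n →
      ∃ (M : Type) (_ : MetricSpace M) (_ : DecidableEq M)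
        (U L S : Finset M) (o : M → ℝ),
        L.card = n ∧ (∀ ℓ, 0 ≤ o ℓ) ∧ IsOpt o U L S ∧
        3 - 6 / ((n : ℝ) + 1) ≤
          ((∑ ℓ ∈ S, thresholdPay o U L ℓ) + connCost U S) / frugalCost o U L S) ∧
    (∀ r : ℝ, r < 3 →
      ∃ (M : Type) (_ : MetricSpace M) (_ : DecidableEq M)
        (U L S : Finset M) (o : M → ℝ),
        (∀ ℓ, 0 ≤ o ℓ) ∧ IsOpt o U L S ∧
        r < ((∑ ℓ ∈ S, thresholdPay o U L ℓ) + connCost U S) / frugalCost o U L S) := by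
  constructor
  · exact fun n hn => VCGLB.main n hn
  · intro r hr
    set n : ℕ := max 2 ⌈6 / (3 - r)⌉₊ with hndef
    have hn2 : 2 ≤ n := le_max_left _ _
    obtain ⟨M, i1, i2, U, L, S, o, _, ho, hopt, hratio⟩ := VCGLB.main n hn2
    refine ⟨M, i1, i2, U, L, S, o, ho, hopt, lt_of_lt_of_le ?_ hratio⟩
    have h3r : (0:ℝ) < 3 - r := by linarith
    have h1 : (6 / (3 - r) : ℝ) ≤ (n : ℝ) := by
      refine (Nat.le_ceil _).trans ?_
      exact_mod_cast Nat.cast_le.mpr (le_max_right 2 _)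
    have hn1 : (0:ℝ) < (n : ℝ) + 1 := by positivity
    have h2 : 6 / ((n:ℝ) + 1) < 3 - r := by
      rw [div_lt_iff₀ hn1]
      have h6 : 6 ≤ (3 - r) * (n : ℝ) := by
        have := (div_le_iff₀ h3r).mp h1
        linarith [mul_comm (3 - r) (n:ℝ)]
      nlinarith
    linarith
end

section
/- If each payment p_ℓ for ℓ ∈ S¹ satisfies p_ℓ ≤ λ·ô_ℓ, with S¹ ⊆ Ŝ, Ŝ a minimizer of predicted cost ĉ, and ô_ℓ ≤ η·o_ℓ for all ℓ with η ≥ 1, then Σ_{ℓ∈S¹} p_ℓ ≤ λ·η·c(F) for any facility set F. -/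
/-- If each payment `p_ℓ` for `ℓ ∈ S¹` satisfies `p_ℓ ≤ λ·ô_ℓ`, with `S¹ ⊆ Ŝ`, `Ŝ` a minimizer
of the predicted cost `ĉ`, and `ô_ℓ ≤ η·o_ℓ` for all ℓ with η, λ ≥ 1, then
`Σ_{ℓ∈S¹} p_ℓ ≤ λ·η·c(F)` for any facility set F. -/
theorem low_threshold_payment_bound
    {L : Type*} [Fintype L]
    (o ohat p : L → ℝ) (ho : ∀ ℓ, 0 ≤ o ℓ) (hohat : ∀ ℓ, 0 ≤ ohat ℓ)
    (η lam : ℝ) (hη : 1 ≤ η) (hlam : 1 ≤ lam)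
    (hpred : ∀ ℓ, ohat ℓ ≤ η * o ℓ)
    (dU : Finset L → ℝ) (hdU : ∀ S, 0 ≤ dU S)
    (Shat S1 : Finset L) (hsub : S1 ⊆ Shat)
    (hmin : ∀ S : Finset L, dU Shat + ∑ ℓ ∈ Shat, ohat ℓ ≤ dU S + ∑ ℓ ∈ S, ohat ℓ)
    (hpay : ∀ ℓ ∈ S1, p ℓ ≤ lam * ohat ℓ) :
    ∀ F : Finset L, ∑ ℓ ∈ S1, p ℓ ≤ lam * η * (dU F + ∑ ℓ ∈ F, o ℓ) := by
  intro F
  have h1 : ∑ ℓ ∈ S1, p ℓ ≤ ∑ ℓ ∈ S1, lam * ohat ℓ := Finset.sum_le_sum hpay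
  have h2 : ∑ ℓ ∈ S1, lam * ohat ℓ ≤ ∑ ℓ ∈ Shat, lam * ohat ℓ :=
    Finset.sum_le_sum_of_subset_of_nonneg hsub (fun i _ _ =>
      mul_nonneg (le_trans zero_le_one hlam) (hohat i))
  have h3 : ∑ ℓ ∈ Shat, ohat ℓ ≤ dU F + ∑ ℓ ∈ F, ohat ℓ := by
    have := hmin F
    have := hdU Shat
    linarith
  have h4 : ∑ ℓ ∈ F, ohat ℓ ≤ η * ∑ ℓ ∈ F, o ℓ := by
    rw [Finset.mul_sum]
    exact Finset.sum_le_sum (fun i _ => hpred i)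
  have hlam0 : 0 ≤ lam := le_trans zero_le_one hlam
  have hη0 : 0 ≤ η := le_trans zero_le_one hη
  have hsumF : 0 ≤ ∑ ℓ ∈ F, o ℓ := Finset.sum_nonneg (fun i _ => ho i)
  calc ∑ ℓ ∈ S1, p ℓ ≤ ∑ ℓ ∈ Shat, lam * ohat ℓ := le_trans h1 h2
    _ = lam * ∑ ℓ ∈ Shat, ohat ℓ := by rw [Finset.mul_sum]
    _ ≤ lam * (dU F + η * ∑ ℓ ∈ F, o ℓ) := by
        apply mul_le_mul_of_nonneg_left _ hlam0; linarith
    _ ≤ lam * η * (dU F + ∑ ℓ ∈ F, o ℓ) := by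
        have hd := hdU F
        have step : dU F + η * ∑ ℓ ∈ F, o ℓ ≤ η * (dU F + ∑ ℓ ∈ F, o ℓ) := by nlinarith
        calc lam * (dU F + η * ∑ ℓ ∈ F, o ℓ) ≤ lam * (η * (dU F + ∑ ℓ ∈ F, o ℓ)) :=
              mul_le_mul_of_nonneg_left step hlam0
          _ = lam * η * (dU F + ∑ ℓ ∈ F, o ℓ) := by ring
end

section
/- Sorted-chain telescoping bound: let x_1, ..., x_n be points (facilities) with associated finite user sets A_1, ..., A_n in a metric space satisfying |A_1| ≤ ... ≤ |A_n|, and let f be a point. Then Σ_{j=1}^{n-1} Σ_{a∈A_j} d(a, x_{j+1}) + Σ_{a∈A_n} d(a, f) ≤ 2·Σ_{j=1}^n Σ_{a∈A_j} d(a,f) + Σ_{j=2}^n Σ_{a∈A_j} d(a, x_j). -/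
/-- Sorted-chain telescoping bound: for points `x 0, …, x (n-1)` with associated finite user
sets `A 0, …, A (n-1)` of non-decreasing cardinality and a point f,
`Σ_{j=0}^{n-2} Σ_{a∈A j} d(a, x (j+1)) + Σ_{a∈A (n-1)} d(a,f)`
is at most
`2·Σ_{j=0}^{n-1} Σ_{a∈A j} d(a,f) + Σ_{j=1}^{n-1} Σ_{a∈A j} d(a, x j)`. -/
theorem sorted_chain_telescoping
    {M : Type*} [MetricSpace M]
    (n : ℕ) (hn : 1 ≤ n) (x : ℕ → M) (A : ℕ → Finset M) (f : M)
    (hcard : ∀ i j : ℕ, i ≤ j → j < n → (A i).card ≤ (A j).card) :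
    (∑ j ∈ Finset.range (n - 1), ∑ a ∈ A j, dist a (x (j + 1)))
        + ∑ a ∈ A (n - 1), dist a f
      ≤ 2 * (∑ j ∈ Finset.range n, ∑ a ∈ A j, dist a f)
        + ∑ j ∈ Finset.range (n - 1), ∑ a ∈ A (j + 1), dist a (x (j + 1)) := by
  set S : ℕ → ℝ := fun j => ∑ a ∈ A j, dist a f with hS
  -- key per-index bound
  have key : ∀ j ∈ Finset.range (n - 1),
      (∑ a ∈ A j, dist a (x (j + 1)))
        ≤ S j + S (j + 1) + ∑ a ∈ A (j + 1), dist a (x (j + 1)) := by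
    intro j hj
    rw [Finset.mem_range] at hj
    have hj1 : j + 1 < n := by omega
    have h1 : (∑ a ∈ A j, dist a (x (j + 1)))
        ≤ S j + (A j).card * dist f (x (j + 1)) := by
      rw [hS]
      simp only
      calc ∑ a ∈ A j, dist a (x (j + 1))
          ≤ ∑ a ∈ A j, (dist a f + dist f (x (j + 1))) :=
            Finset.sum_le_sum (fun a _ => dist_triangle a f (x (j + 1)))
        _ = ∑ a ∈ A j, dist a f + (A j).card * dist f (x (j + 1)) := by
            rw [Finset.sum_add_distrib, Finset.sum_const, nsmul_eq_mul]
    have h2 : ((A j).card : ℝ) * dist f (x (j + 1))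
        ≤ ((A (j + 1)).card : ℝ) * dist f (x (j + 1)) := by
      have := hcard j (j + 1) (by omega) hj1
      exact mul_le_mul_of_nonneg_right (by exact_mod_cast this) dist_nonneg
    have h3 : ((A (j + 1)).card : ℝ) * dist f (x (j + 1))
        ≤ S (j + 1) + ∑ a ∈ A (j + 1), dist a (x (j + 1)) := by
      have := Finset.card_nsmul_le_sum (A (j + 1))
        (fun b => dist b f + dist b (x (j + 1))) (dist f (x (j + 1)))
        (fun b _ => by
          calc dist f (x (j + 1)) ≤ dist f b + dist b (x (j + 1)) :=
                dist_triangle f b (x (j + 1))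
            _ = dist b f + dist b (x (j + 1)) := by rw [dist_comm])
      rw [nsmul_eq_mul, Finset.sum_add_distrib] at this
      exact this
    linarith
  have hsum := Finset.sum_le_sum key
  rw [Finset.sum_add_distrib, Finset.sum_add_distrib] at hsum
  -- sums over S
  have e1 : ∑ j ∈ Finset.range (n - 1), S j + S (n - 1)
      = ∑ j ∈ Finset.range n, S j := by
    have : n = (n - 1) + 1 := by omega
    rw [this, Finset.sum_range_succ]
    simp [this.symm]
  have e2 : ∑ j ∈ Finset.range (n - 1), S (j + 1) ≤ ∑ j ∈ Finset.range n, S j := by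
    have : n = (n - 1) + 1 := by omega
    rw [this, Finset.sum_range_succ']
    simp only [Nat.add_sub_cancel]
    have h0 : 0 ≤ S 0 := Finset.sum_nonneg (fun a _ => dist_nonneg)
    linarith
  have : (∑ j ∈ Finset.range (n - 1), ∑ a ∈ A j, dist a (x (j + 1)))
      + ∑ a ∈ A (n - 1), dist a f
      ≤ (∑ j ∈ Finset.range (n - 1), S j + S (n - 1))
        + ∑ j ∈ Finset.range (n - 1), S (j + 1)
        + ∑ j ∈ Finset.range (n - 1), ∑ a ∈ A (j + 1), dist a (x (j + 1)) := by
    have : (∑ a ∈ A (n - 1), dist a f) = S (n - 1) := rfl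
    linarith [hsum]
  rw [e1] at this
  linarith [e2]
end
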